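/- Let m and p be integers with m, p ≥ 2 and set n = m + p. The number of permutations σ of {1,…,n} satisfying −p ≤ i − σ(i) ≤ m for all i ∈ {1,…,n} equals (−1)^p · Σ_{i=0}^{p} (−1)^i · i! · (i+1)^m · S(p,i), where the equality is an equality of integers. (This common value is the poly-Bernoulli number B_p^{(−m)}.) -/

import Mathlib

/-- Stirling numbers of the second kind: `stirling n k` is the number of
partitions of an `n`-element set into `k` nonempty blocks. It satisfies
`stirling 0 0 = 1`, `stirling n 0 = 0` for `n ≥ 1`, and
`stirling (n+1) k = k * stirling n k + stirling n (k-1)`. -/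
def stirling : ℕ → ℕ → ℕ
  | 0, 0 => 1
  | 0, _ + 1 => 0
  | _ + 1, 0 => 0
  | n + 1, k + 1 => (k + 1) * stirling n (k + 1) + stirling n k

open Finset

lemma stirling_zero_right : ∀ n, 1 ≤ n → stirling n 0 = 0
  | _ + 1, _ => rfl

lemma stirling_eq_zero_of_lt : ∀ {n k}, n < k → stirling n k = 0
  | 0, _ + 1, _ => rfl
  | n + 1, k + 1, h => by
    rw [stirling, stirling_eq_zero_of_lt (by omega), stirling_eq_zero_of_lt (by omega)]
    ring

lemma stirling_self : ∀ n, stirling n n = 1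
  | 0 => rfl
  | n + 1 => by
    rw [stirling, stirling_eq_zero_of_lt (by omega), stirling_self n]
    ring

open Finset in
lemma L1 (m k : ℕ) :
    ∑ j ∈ range (m + 1), (-1 : ℤ) ^ j * stirling m j * (j + k).factorial
      = (-1) ^ m * k.factorial * (k + 1) ^ m := by
  induction m generalizing k with
  | zero => simp [stirling]
  | succ m ih =>
    have key : ∀ j ∈ range (m + 1),
        (-1 : ℤ) ^ (j+1) * stirling (m+1) (j+1) * ((j+1) + k).factorial
        = ((-1:ℤ)^(j+1) * ((j+1) * stirling m (j+1)) * ((j+1) + k).factorial)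
          + (-(k+1)) * ((-1:ℤ)^j * stirling m j * (j+k).factorial)
          - ((-1:ℤ)^j * (j : ℤ) * stirling m j * (j+k).factorial) := by
      intro j _
      rw [stirling]
      have : (j+1) + k = (j + k) + 1 := by omega
      rw [this, Nat.factorial_succ]
      push_cast
      ring
    rw [Finset.sum_range_succ' _ (m+1), Finset.sum_congr rfl key]
    have h0 : ((-1:ℤ)^0 * stirling (m+1) 0 * (0 + k).factorial) = 0 := by
      simp [stirling]
    rw [h0, add_zero]
    simp only [sub_eq_add_neg]
    rw [Finset.sum_add_distrib, Finset.sum_add_distrib, Finset.sum_neg_distrib]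
    have hshift : ∑ j ∈ range (m+1),
        ((-1:ℤ)^(j+1) * ((j+1) * stirling m (j+1)) * ((j+1) + k).factorial)
        = ∑ j ∈ range (m+1), ((-1:ℤ)^j * (j:ℤ) * stirling m j * (j+k).factorial) := by
      have := Finset.sum_range_succ' (fun j => (-1:ℤ)^j * (j:ℤ) * stirling m j * (j+k).factorial) (m+1)
      simp only [Nat.cast_zero, pow_zero] at this
      rw [Finset.sum_range_succ _ (m+1)] at this
      rw [stirling_eq_zero_of_lt (Nat.lt_succ_self m)] at this
      have h2 : ∀ j ∈ range (m+1),
          ((-1:ℤ)^(j+1) * ((j+1) * stirling m (j+1)) * ((j+1) + k).factorial)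
          = ((-1:ℤ)^(j+1) * ((j+1):ℤ) * stirling m (j+1) * ((j+1)+k).factorial) := by
        intro j _; push_cast; ring
      rw [Finset.sum_congr rfl h2]
      simp only [Nat.cast_add, Nat.cast_one] at this ⊢
      simp at this
      linarith [this]
    rw [hshift, ← Finset.mul_sum, ih k]
    push_cast
    ring

lemma card_nbij'_compat {α β : Type*} {s : Finset α} {t : Finset β} (i : α → β) (j : β → α)
    (hi : ∀ a ∈ s, i a ∈ t) (hj : ∀ a ∈ t, j a ∈ s) (left_inv : ∀ a ∈ s, j (i a) = a)
    (right_inv : ∀ a ∈ t, i (j a) = a) : s.card = t.card :=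
  Finset.card_nbij' i j hi hj left_inv right_inv

lemma neg_one_pow_eq (x y n : ℕ) (h : x + y = n) : (-1:ℤ)^x = (-1)^n * (-1)^y := by
  have h1 : (-1:ℤ)^n = (-1)^x * (-1)^y := by rw [← pow_add, h]
  have h2 : (-1:ℤ)^y * (-1)^y = 1 := by
    rw [← pow_add]
    exact Even.neg_one_pow ⟨y, rfl⟩
  calc (-1:ℤ)^x = (-1)^x * ((-1)^y * (-1)^y) := by rw [h2, mul_one]
    _ = (-1)^n * (-1)^y := by rw [h1]; ring


def PP (t a : ℕ) : Finset (Finset (ℕ × ℕ)) :=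
  ((Finset.range t ×ˢ Finset.range t).powerset.filter
    (fun T => T.card = a ∧ (∀ x ∈ T, x.1 ≤ x.2) ∧
      (∀ x ∈ T, ∀ y ∈ T, x.1 = y.1 → x = y) ∧ (∀ x ∈ T, ∀ y ∈ T, x.2 = y.2 → x = y)))

lemma mem_PP {t a : ℕ} {T : Finset (ℕ × ℕ)} :
    T ∈ PP t a ↔ (∀ x ∈ T, x.1 < t ∧ x.2 < t) ∧ T.card = a ∧ (∀ x ∈ T, x.1 ≤ x.2) ∧
      (∀ x ∈ T, ∀ y ∈ T, x.1 = y.1 → x = y) ∧ (∀ x ∈ T, ∀ y ∈ T, x.2 = y.2 → x = y) := by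
  simp only [PP, mem_filter, mem_powerset]
  constructor
  · rintro ⟨hsub, h⟩
    refine ⟨fun x hx => ?_, h⟩
    have := hsub hx
    simp only [mem_product, mem_range] at this
    exact this
  · rintro ⟨hb, h⟩
    refine ⟨fun x hx => ?_, h⟩
    simp only [mem_product, mem_range]
    exact hb x hx

lemma PP_zero (t : ℕ) : PP t 0 = {∅} := by
  ext T
  simp only [mem_PP, mem_singleton]
  constructor
  · rintro ⟨-, hc, -⟩
    exact Finset.card_eq_zero.mp hc
  · rintro rfl
    simp

lemma PP_card_le {t a : ℕ} {T : Finset (ℕ × ℕ)} (h : T ∈ PP t a) : a ≤ t := by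
  rw [mem_PP] at h
  obtain ⟨hb, hc, -, hrow, -⟩ := h
  have hinj : Set.InjOn Prod.fst T := fun x hx y hy hxy => hrow x hx y hy hxy
  have h1 : (T.image Prod.fst).card = a := by
    rw [Finset.card_image_of_injOn hinj, hc]
  have h2 : T.image Prod.fst ⊆ range t := by
    intro i hi
    simp only [mem_image] at hi
    obtain ⟨x, hx, rfl⟩ := hi
    exact mem_range.mpr (hb x hx).1
  calc a = (T.image Prod.fst).card := h1.symm
    _ ≤ (range t).card := Finset.card_le_card h2
    _ = t := card_range t

lemma PP_succ_card (t a : ℕ) :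
    (PP (t+1) (a+1)).card = (PP t (a+1)).card + (t + 1 - a) * (PP t a).card := by
  classical
  set s := PP (t+1) (a+1) with hs
  have hsplit : s.card = (s.filter (fun T => ∀ x ∈ T, x.2 ≠ t)).card
      + (s.filter (fun T => ¬ ∀ x ∈ T, x.2 ≠ t)).card :=
    (Finset.card_filter_add_card_filter_not _).symm
  have hA : s.filter (fun T => ∀ x ∈ T, x.2 ≠ t) = PP t (a+1) := by
    ext T
    simp only [mem_filter, hs, mem_PP]
    constructor
    · rintro ⟨⟨hb, h⟩, hcol⟩
      refine ⟨fun x hx => ?_, h⟩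
      have h1 := (hb x hx).2
      have h2 := hcol x hx
      have h3 := h.2.1 x hx
      omega
    · rintro ⟨hb, h⟩
      refine ⟨⟨fun x hx => ?_, h⟩, fun x hx => ?_⟩
      · have := hb x hx; omega
      · have := (hb x hx).2; omega
  -- the B part
  set B := s.filter (fun T => ¬ ∀ x ∈ T, x.2 ≠ t) with hB
  have hBcard : B.card = (t + 1 - a) * (PP t a).card := by
    have hmap : ∀ T ∈ B, T.filter (fun x => x.2 ≠ t) ∈ PP t a := by
      intro T hT
      simp only [hB, mem_filter, hs, mem_PP] at hT
      obtain ⟨⟨hb, hc, hd, hrow, hcol⟩, hex⟩ := hT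
      push_neg at hex
      obtain ⟨x0, hx0, hx0t⟩ := hex
      have hfe : T.filter (fun x => x.2 = t) = {x0} := by
        ext y
        simp only [mem_filter, mem_singleton]
        constructor
        · rintro ⟨hy, hyt⟩
          exact hcol y hy x0 hx0 (by omega)
        · rintro rfl
          exact ⟨hx0, by omega⟩
      rw [mem_PP]
      refine ⟨?_, ?_, ?_, ?_, ?_⟩
      · intro x hx
        simp only [mem_filter] at hx
        have h1 := hb x hx.1
        have h2 := hd x hx.1
        have := hx.2
        omega
      · have herase : T.filter (fun x => x.2 ≠ t) = T.erase x0 := by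
          ext y
          simp only [mem_filter, Finset.mem_erase]
          constructor
          · rintro ⟨hy, hyt⟩
            refine ⟨fun hcontra => ?_, hy⟩
            subst hcontra; exact hyt (by omega)
          · rintro ⟨hne, hy⟩
            exact ⟨hy, fun hyt => hne (hcol y hy x0 hx0 (by omega))⟩
        rw [herase, Finset.card_erase_of_mem hx0, hc]
        omega
      · intro x hx; exact hd x (mem_filter.mp hx).1
      · intro x hx y hy; exact hrow x (mem_filter.mp hx).1 y (mem_filter.mp hy).1
      · intro x hx y hy; exact hcol x (mem_filter.mp hx).1 y (mem_filter.mp hy).1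
    rw [Finset.card_eq_sum_card_fiberwise hmap]
    rw [Finset.sum_congr rfl (fun T' hT' => ?_), Finset.sum_const, smul_eq_mul, mul_comm]
    -- fiber over T' has card t+1-a
    have hT'c : T'.card = a := (mem_PP.mp hT').2.1
    have hale : a ≤ t := PP_card_le hT'
    -- bijection with range (t+1) \ rows T'
    have : (B.filter (fun T => T.filter (fun x => x.2 ≠ t) = T')).card
        = ((range (t+1)) \ T'.image Prod.fst).card := by
      apply card_nbij'_compat (fun T => (T.filter (fun x => x.2 = t)).sup Prod.fst)
        (fun i => insert (i, t) T')
      · -- maps into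
        intro T hT
        simp only [mem_filter] at hT
        obtain ⟨hTB, hTf⟩ := hT
        simp only [hB, mem_filter, hs, mem_PP] at hTB
        obtain ⟨⟨hb, hc, hd, hrow, hcol⟩, hex⟩ := hTB
        push_neg at hex
        obtain ⟨x0, hx0, hx0t⟩ := hex
        have hfe : T.filter (fun x => x.2 = t) = {x0} := by
          ext y
          simp only [mem_filter, mem_singleton]
          exact ⟨fun ⟨hy, hyt⟩ => hcol y hy x0 hx0 (by omega), fun h => by subst h; exact ⟨hx0, by omega⟩⟩
        rw [hfe, Finset.sup_singleton]
        simp only [mem_sdiff, mem_range, mem_image]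
        constructor
        · exact (hb x0 hx0).1
        · rintro ⟨y, hy, hyx⟩
          rw [← hTf] at hy
          simp only [mem_filter] at hy
          have := hrow y hy.1 x0 hx0 hyx
          rw [this] at hy
          exact hy.2 (by omega)
      · -- inverse maps into
        intro i hi
        simp only [mem_sdiff, mem_range, mem_image] at hi
        obtain ⟨hilt, hinotrow⟩ := hi
        have hT'm := mem_PP.mp hT'
        obtain ⟨hb, hc, hd, hrow, hcol⟩ := hT'm
        have hnotmem : (i, t) ∉ T' := fun h => absurd ((hb (i,t) h).2 : t < t) (lt_irrefl t)
        simp only [mem_filter]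
        refine ⟨?_, ?_⟩
        · simp only [hB, mem_filter, hs, mem_PP]
          refine ⟨⟨?_, ?_, ?_, ?_, ?_⟩, ?_⟩
          · intro x hx
            rcases Finset.mem_insert.mp hx with h | h
            · subst h; omega
            · have := hb x h; omega
          · rw [Finset.card_insert_of_notMem hnotmem, hc]
          · intro x hx
            rcases Finset.mem_insert.mp hx with h | h
            · subst h; omega
            · exact hd x h
          · intro x hx y hy hxy
            rcases Finset.mem_insert.mp hx with h1 | h1 <;>
              rcases Finset.mem_insert.mp hy with h2 | h2
            · rw [h1, h2]
            · exfalso; subst h1; exact hinotrow ⟨y, h2, hxy.symm⟩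
            · exfalso; subst h2; exact hinotrow ⟨x, h1, hxy⟩
            · exact hrow x h1 y h2 hxy
          · intro x hx y hy hxy
            rcases Finset.mem_insert.mp hx with h1 | h1 <;>
              rcases Finset.mem_insert.mp hy with h2 | h2
            · rw [h1, h2]
            · exfalso; subst h1; have := (hb y h2).2; simp at hxy; omega
            · exfalso; subst h2; have := (hb x h1).2; simp at hxy; omega
            · exact hcol x h1 y h2 hxy
          · push_neg
            exact ⟨(i, t), Finset.mem_insert_self _ _, rfl⟩
        · -- filter back
          ext y
          simp only [mem_filter, Finset.mem_insert]
          constructor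
          · rintro ⟨h | h, hyt⟩
            · exact absurd (by rw [h]) hyt
            · exact h
          · intro hy
            have := (hb y hy).2
            exact ⟨Or.inr hy, by omega⟩
      · -- left inverse
        intro T hT
        simp only [mem_filter] at hT
        obtain ⟨hTB, hTf⟩ := hT
        simp only [hB, mem_filter, hs, mem_PP] at hTB
        obtain ⟨⟨hb, hc, hd, hrow, hcol⟩, hex⟩ := hTB
        push_neg at hex
        obtain ⟨x0, hx0, hx0t⟩ := hex
        have hfe : T.filter (fun x => x.2 = t) = {x0} := by
          ext y
          simp only [mem_filter, mem_singleton]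
          exact ⟨fun ⟨hy, hyt⟩ => hcol y hy x0 hx0 (by omega), fun h => by subst h; exact ⟨hx0, by omega⟩⟩
        rw [hfe, Finset.sup_singleton, ← hTf]
        have hx02 : x0.2 = t := by omega
        ext y
        simp only [Finset.mem_insert, mem_filter]
        constructor
        · rintro (h | h)
          · rw [h, ← hx02]; exact hx0
          · exact h.1
        · intro hy
          by_cases hyt : y.2 = t
          · left
            have := hcol y hy x0 hx0 (by omega)
            rw [this, ← hx02]
          · right; exact ⟨hy, hyt⟩
      · -- right inverse
        intro i hi
        simp only [mem_sdiff, mem_range, mem_image] at hi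
        have hT'm := mem_PP.mp hT'
        obtain ⟨hb, hc, hd, hrow, hcol⟩ := hT'm
        have : (insert (i, t) T').filter (fun x => x.2 = t) = {(i, t)} := by
          ext y
          simp only [mem_filter, Finset.mem_insert, mem_singleton]
          constructor
          · rintro ⟨h | h, hyt⟩
            · exact h
            · exfalso; have := (hb y h).2; omega
          · rintro rfl; exact ⟨Or.inl rfl, rfl⟩
        rw [this, Finset.sup_singleton]
    rw [this]
    rw [Finset.card_sdiff_of_subset, card_range]
    · have : (T'.image Prod.fst).card = a := by
        rw [Finset.card_image_of_injOn, hT'c]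
        intro x hx y hy hxy
        exact (mem_PP.mp hT').2.2.2.1 x hx y hy hxy
      omega
    · intro i hi
      simp only [mem_image] at hi
      obtain ⟨x, hx, rfl⟩ := hi
      have := ((mem_PP.mp hT').1 x hx).1
      exact mem_range.mpr (by omega)
  rw [hsplit, hA, hBcard]

lemma PP_card (t : ℕ) : ∀ a, (PP t a).card = stirling (t+1) (t+1-a) := by
  induction t with
  | zero =>
    intro a
    rcases a with _ | a
    · rw [PP_zero]; simp [stirling]
    · have : PP 0 (a+1) = ∅ := by
        ext T
        simp only [mem_PP, Finset.notMem_empty, iff_false]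
        rintro ⟨hb, hc, -⟩
        rcases Finset.card_eq_succ.mp hc with ⟨x, s', hx, rfl, -⟩
        exact absurd (hb x (Finset.mem_insert_self _ _)).1 (by omega)
      rw [this]
      simp [stirling]
  | succ t ih =>
    intro a
    rcases a with _ | a
    · rw [PP_zero, Nat.sub_zero]
      simp [stirling_self]
    · rw [PP_succ_card, ih (a+1), ih a]
      rcases Nat.lt_or_ge a (t+1) with h | h
      · have h1 : t + 1 + 1 - (a + 1) = (t - a) + 1 := by omega
        have h2 : t + 1 - (a + 1) = t - a := by omega
        have h3 : t + 1 - a = t - a + 1 := by omega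
        rw [h1, h2, h3]
        rw [show stirling (t+1+1) ((t-a)+1) = ((t-a)+1) * stirling (t+1) ((t-a)+1) + stirling (t+1) (t-a) from rfl]
        ring
      · have h1 : t + 1 + 1 - (a + 1) = 0 := by omega
        have h2 : t + 1 - (a + 1) = 0 := by omega
        have h3 : t + 1 - a = 0 := by omega
        rw [h1, h2, h3]
        show 0 + 0 * stirling (t+1) 0 = stirling (t+1+1) 0
        show 0 + 0 * stirling (t+1) 0 = 0
        simp

lemma ext_count {n : ℕ} (R : Finset (Fin n)) (h : Fin n → Fin n)
    (hinj : ∀ i ∈ R, ∀ j ∈ R, h i = h j → i = j) :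
    (Finset.univ.filter (fun σ : Equiv.Perm (Fin n) => ∀ i ∈ R, σ i = h i)).card
      = (n - R.card).factorial := by
  induction R using Finset.induction_on with
  | empty => simp [Fintype.card_perm]
  | @insert i R hiR ih =>
    have hinjR : ∀ a ∈ R, ∀ b ∈ R, h a = h b → a = b := fun a ha b hb =>
      hinj a (mem_insert_of_mem ha) b (mem_insert_of_mem hb)
    have hS := ih hinjR
    set S := Finset.univ.filter (fun σ : Equiv.Perm (Fin n) => ∀ r ∈ R, σ r = h r) with hSdef
    set I := R.image h with hIdef
    have hIcard : I.card = R.card := Finset.card_image_of_injOn (fun a ha b hb => hinjR a ha b hb)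
    have hhiI : h i ∉ I := by
      intro hmem
      obtain ⟨r, hr, hrh⟩ := Finset.mem_image.mp hmem
      exact hiR (hinj r (mem_insert_of_mem hr) i (mem_insert_self i R) hrh ▸ hr)
    have hfib : S.card = ∑ j ∈ Finset.univ, (S.filter (fun σ => σ i = j)).card :=
      Finset.card_eq_sum_card_fiberwise (fun σ _ => mem_univ _)
    have hzero : ∀ j ∈ I, (S.filter (fun σ => σ i = j)).card = 0 := by
      intro j hj
      rw [Finset.card_eq_zero, Finset.filter_eq_empty_iff]
      intro σ hσ heq
      obtain ⟨r, hr, rfl⟩ := Finset.mem_image.mp hj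
      have h1 : σ r = h r := (Finset.mem_filter.mp hσ).2 r hr
      have : σ i = σ r := by rw [heq, h1]
      exact hiR (σ.injective this ▸ hr)
    have hsame : ∀ j ∈ Finset.univ \ I,
        (S.filter (fun σ => σ i = j)).card = (S.filter (fun σ => σ i = h i)).card := by
      intro j hj
      have hjI : j ∉ I := (Finset.mem_sdiff.mp hj).2
      have hmem : ∀ (a b : Fin n), a ∉ I → b ∉ I → ∀ σ ∈ S.filter (fun σ => σ i = a),
          σ.trans (Equiv.swap a b) ∈ S.filter (fun σ => σ i = b) := by
        intro a b haI hbI σ hσ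
        simp only [Finset.mem_filter, hSdef, Finset.mem_univ, true_and] at hσ ⊢
        obtain ⟨hσR, hσi⟩ := hσ
        constructor
        · intro r hr
          simp only [Equiv.trans_apply, hσR r hr]
          apply Equiv.swap_apply_of_ne_of_ne
          · exact fun hc => haI (hc ▸ Finset.mem_image_of_mem h hr)
          · exact fun hc => hbI (hc ▸ Finset.mem_image_of_mem h hr)
        · simp only [Equiv.trans_apply, hσi, Equiv.swap_apply_left]
      apply Finset.card_nbij' (fun σ => σ.trans (Equiv.swap j (h i)))
        (fun σ => σ.trans (Equiv.swap j (h i)))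
      · exact hmem j (h i) hjI hhiI
      · intro σ hσ
        have := hmem (h i) j hhiI hjI σ hσ
        rwa [Equiv.swap_comm] at this
      · intro σ hσ
        ext x
        simp [Equiv.swap_apply_self]
      · intro σ hσ
        ext x
        simp [Equiv.swap_apply_self]
    -- now sum up
    have hcount : S.card = ((Finset.univ : Finset (Fin n)).card - I.card) * (S.filter (fun σ => σ i = h i)).card := by
      have hsub : (Finset.univ \ I) ⊆ (Finset.univ : Finset (Fin n)) := Finset.sdiff_subset
      have hzz : ∀ x ∈ (Finset.univ : Finset (Fin n)), x ∉ Finset.univ \ I →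
          (S.filter (fun σ => σ i = x)).card = 0 := by
        intro x hx hnx
        have : x ∈ I := by simpa [Finset.mem_sdiff] using hnx
        exact hzero x this
      rw [hfib, ← Finset.sum_subset hsub hzz, Finset.sum_congr rfl hsame, Finset.sum_const,
        smul_eq_mul, Finset.card_sdiff_of_subset (Finset.subset_univ I)]
    have hcard_univ : (Finset.univ : Finset (Fin n)).card = n := by simp
    have hRn : R.card + 1 ≤ n := by
      have := Finset.card_le_univ (insert i R)
      rw [Finset.card_insert_of_notMem hiR] at this
      simpa using this
    have hgoal : Finset.univ.filter (fun σ : Equiv.Perm (Fin n) => ∀ r ∈ insert i R, σ r = h r)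
        = S.filter (fun σ => σ i = h i) := by
      ext σ
      simp only [Finset.mem_filter, hSdef, Finset.mem_univ, true_and, Finset.forall_mem_insert]
      tauto
    rw [hgoal]
    have hfacteq : (n - R.card).factorial = (n - R.card) * (n - R.card - 1).factorial := by
      have : n - R.card = (n - R.card - 1) + 1 := by omega
      rw [this, Nat.factorial_succ]
      congr 1
    rw [hS, hIcard, hcard_univ] at hcount
    have := hcount.symm.trans hfacteq
    have hpos : 0 < n - R.card := by omega
    have hres := Nat.eq_of_mul_eq_mul_left hpos this
    rw [hres, Finset.card_insert_of_notMem hiR]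
    congr 1

section main
variable (m p : ℕ)

def forb (i j : Fin (m + p)) : Prop := (i : ℕ) + p < (j : ℕ) ∨ (j : ℕ) + m < (i : ℕ)

instance : ∀ i j, Decidable (forb m p i j) := fun i j => by unfold forb; infer_instance

def Hf (R : Finset (Fin (m + p))) : Finset (Fin (m + p) → Fin (m + p)) :=
  Finset.univ.filter (fun h => (∀ i ∈ R, forb m p i (h i)) ∧ (∀ i ∉ R, h i = i) ∧
    (∀ i ∈ R, ∀ j ∈ R, h i = h j → i = j))

def TOPs : Finset (Fin (m + p)) := Finset.univ.filter (fun i => (i : ℕ) + 2 ≤ m)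
def BOTs : Finset (Fin (m + p)) := Finset.univ.filter (fun i => m + 1 ≤ (i : ℕ))

lemma mem_Hf {R : Finset (Fin (m + p))} {h : Fin (m + p) → Fin (m + p)} :
    h ∈ Hf m p R ↔ (∀ i ∈ R, forb m p i (h i)) ∧ (∀ i ∉ R, h i = i) ∧
      (∀ i ∈ R, ∀ j ∈ R, h i = h j → i = j) := by
  simp [Hf]

lemma forb_top {i j : Fin (m + p)} (hi : i ∈ TOPs m p) (hf : forb m p i j) :
    (i : ℕ) + p < (j : ℕ) := by
  simp only [TOPs, mem_filter, mem_univ, true_and] at hi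
  rcases hf with h | h
  · exact h
  · exfalso; omega

lemma forb_bot {i j : Fin (m + p)} (hi : i ∈ BOTs m p) (hf : forb m p i j) :
    (j : ℕ) + m < (i : ℕ) := by
  simp only [BOTs, mem_filter, mem_univ, true_and] at hi
  rcases hf with h | h
  · exfalso; have := j.isLt; omega
  · exact h

lemma TOPs_disj_BOTs : Disjoint (TOPs m p) (BOTs m p) := by
  rw [Finset.disjoint_left]
  intro i hi hbi
  simp only [TOPs, BOTs, mem_filter, mem_univ, true_and] at hi hbi
  omega

lemma Hzero {R : Finset (Fin (m + p))} (h : ¬ R ⊆ TOPs m p ∪ BOTs m p) :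
    (Hf m p R).card = 0 := by
  rw [Finset.card_eq_zero, Finset.eq_empty_iff_forall_notMem]
  intro f hf
  rw [mem_Hf] at hf
  obtain ⟨i, hiR, hiU⟩ := Finset.not_subset.mp h
  simp only [Finset.mem_union, TOPs, BOTs, mem_filter, mem_univ, true_and] at hiU
  push_neg at hiU
  have hforb := hf.1 i hiR
  have h1 := (f i).isLt
  have h2 := i.isLt
  rcases hforb with h3 | h3 <;> omega

lemma Hsplit {R1 R2 : Finset (Fin (m + p))} (h1 : R1 ⊆ TOPs m p) (h2 : R2 ⊆ BOTs m p) :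
    (Hf m p (R1 ∪ R2)).card = (Hf m p R1).card * (Hf m p R2).card := by
  classical
  have hdisj : Disjoint R1 R2 := Finset.disjoint_of_subset_left h1
    (Finset.disjoint_of_subset_right h2 (TOPs_disj_BOTs m p))
  rw [← Finset.card_product]
  apply card_nbij'_compat
    (fun h => ((fun i => if i ∈ R1 then h i else i), (fun i => if i ∈ R2 then h i else i)))
    (fun q => (fun i => if i ∈ R1 then q.1 i else if i ∈ R2 then q.2 i else i))
  · intro h hh
    rw [mem_Hf] at hh
    obtain ⟨hforb, hid, hinj⟩ := hh
    simp only [Finset.mem_product]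
    constructor
    · rw [mem_Hf]
      refine ⟨fun i hi => ?_, fun i hi => if_neg hi, fun i hi j hj hij => ?_⟩
      · rw [if_pos hi]; exact hforb i (Finset.mem_union_left _ hi)
      · rw [if_pos hi, if_pos hj] at hij
        exact hinj i (Finset.mem_union_left _ hi) j (Finset.mem_union_left _ hj) hij
    · rw [mem_Hf]
      refine ⟨fun i hi => ?_, fun i hi => if_neg hi, fun i hi j hj hij => ?_⟩
      · rw [if_pos hi]; exact hforb i (Finset.mem_union_right _ hi)
      · rw [if_pos hi, if_pos hj] at hij
        exact hinj i (Finset.mem_union_right _ hi) j (Finset.mem_union_right _ hj) hij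
  · intro q hq
    simp only [Finset.mem_product] at hq
    obtain ⟨hq1, hq2⟩ := hq
    rw [mem_Hf] at hq1 hq2
    obtain ⟨hforb1, hid1, hinj1⟩ := hq1
    obtain ⟨hforb2, hid2, hinj2⟩ := hq2
    rw [mem_Hf]
    refine ⟨fun i hi => ?_, fun i hi => ?_, fun i hi j hj hij => ?_⟩
    · rcases Finset.mem_union.mp hi with h | h
      · rw [if_pos h]; exact hforb1 i h
      · rw [if_neg (Finset.disjoint_right.mp hdisj h), if_pos h]; exact hforb2 i h
    · rw [Finset.mem_union] at hi
      push_neg at hi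
      rw [if_neg hi.1, if_neg hi.2]
    · have key : ∀ x ∈ R1, ∀ y ∈ R2, (if x ∈ R1 then q.1 x else if x ∈ R2 then q.2 x else x)
          ≠ (if y ∈ R1 then q.1 y else if y ∈ R2 then q.2 y else y) := by
        intro x hx y hy
        rw [if_pos hx, if_neg (Finset.disjoint_right.mp hdisj hy), if_pos hy]
        intro hc
        have hf1 := forb_top m p (h1 hx) (hforb1 x hx)
        have hf2 := forb_bot m p (h2 hy) (hforb2 y hy)
        have := (q.2 y).isLt
        rw [hc] at hf1
        omega
      rcases Finset.mem_union.mp hi with hi1 | hi2 <;> rcases Finset.mem_union.mp hj with hj1 | hj2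
      · rw [if_pos hi1, if_pos hj1] at hij; exact hinj1 i hi1 j hj1 hij
      · exact absurd hij (key i hi1 j hj2)
      · exact absurd hij.symm (key j hj1 i hi2)
      · rw [if_neg (Finset.disjoint_right.mp hdisj hi2), if_pos hi2,
          if_neg (Finset.disjoint_right.mp hdisj hj2), if_pos hj2] at hij
        exact hinj2 i hi2 j hj2 hij
  · intro h hh
    rw [mem_Hf] at hh
    funext i
    simp only
    by_cases hi1 : i ∈ R1
    · rw [if_pos hi1, if_pos hi1]
    · rw [if_neg hi1]
      by_cases hi2 : i ∈ R2
      · rw [if_pos hi2, if_pos hi2]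
      · rw [if_neg hi2]
        exact (hh.2.1 i (fun hc => by rcases Finset.mem_union.mp hc with h | h <;> tauto)).symm
  · intro q hq
    simp only [Finset.mem_product] at hq
    obtain ⟨hq1, hq2⟩ := hq
    rw [mem_Hf] at hq1 hq2
    have hdr : ∀ i ∈ R2, i ∉ R1 := fun i h => Finset.disjoint_right.mp hdisj h
    have e1 : (fun i => if i ∈ R1 then
        (if i ∈ R1 then q.1 i else if i ∈ R2 then q.2 i else i) else i) = q.1 := by
      funext i
      by_cases hi1 : i ∈ R1
      · rw [if_pos hi1, if_pos hi1]
      · rw [if_neg hi1]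
        exact (hq1.2.1 i hi1).symm
    have e2 : (fun i => if i ∈ R2 then
        (if i ∈ R1 then q.1 i else if i ∈ R2 then q.2 i else i) else i) = q.2 := by
      funext i
      by_cases hi2 : i ∈ R2
      · rw [if_pos hi2, if_neg (hdr i hi2), if_pos hi2]
      · rw [if_neg hi2]
        exact (hq2.2.1 i hi2).symm
    exact Prod.ext e1 e2


lemma step2 (R : Finset (Fin (m + p))) :
    (Finset.univ.filter (fun σ : Equiv.Perm (Fin (m + p)) => ∀ i ∈ R, forb m p i (σ i))).card
      = (Hf m p R).card * (m + p - R.card).factorial := by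
  classical
  have hmap : ∀ σ ∈ (Finset.univ.filter
      (fun σ : Equiv.Perm (Fin (m + p)) => ∀ i ∈ R, forb m p i (σ i))),
      (fun i => if i ∈ R then σ i else i) ∈ Hf m p R := by
    intro σ hσ
    simp only [mem_filter, mem_univ, true_and] at hσ
    simp only [Hf, mem_filter, mem_univ, true_and]
    refine ⟨fun i hi => ?_, fun i hi => if_neg hi, fun i hi j hj hij => ?_⟩
    · rw [if_pos hi]; exact hσ i hi
    · rw [if_pos hi, if_pos hj] at hij
      exact σ.injective hij
  rw [Finset.card_eq_sum_card_fiberwise hmap]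
  rw [Finset.sum_congr rfl (fun h hh => ?_), Finset.sum_const, smul_eq_mul]
  have hH := hh
  simp only [Hf, mem_filter, mem_univ, true_and] at hH
  obtain ⟨hforb, hid, hinj⟩ := hH
  have : (Finset.univ.filter
      (fun σ : Equiv.Perm (Fin (m + p)) => ∀ i ∈ R, forb m p i (σ i))).filter
        (fun σ => (fun i => if i ∈ R then σ i else i) = h)
      = Finset.univ.filter (fun σ : Equiv.Perm (Fin (m + p)) => ∀ i ∈ R, σ i = h i) := by
    ext σ
    simp only [mem_filter, mem_univ, true_and]
    constructor
    · rintro ⟨hforbσ, hfun⟩ i hi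
      have := congrFun hfun i
      rwa [if_pos hi] at this
    · intro heq
      refine ⟨fun i hi => ?_, funext fun i => ?_⟩
      · rw [heq i hi]; exact hforb i hi
      · by_cases hi : i ∈ R
        · rw [if_pos hi]; exact heq i hi
        · rw [if_neg hi]; exact (hid i hi).symm
  rw [this, ext_count R h hinj]

lemma step12 :
    (((Finset.univ.filter (fun σ : Equiv.Perm (Fin (m + p)) =>
        ∀ i, ¬ forb m p i (σ i))).card : ℤ))
      = ∑ R ∈ (Finset.univ : Finset (Fin (m + p))).powerset,
          (-1) ^ R.card * (((Hf m p R).card : ℤ) * ((m + p - R.card).factorial : ℤ)) := by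
  classical
  rw [← Finset.sum_boole]
  have h1 : ∀ σ ∈ (Finset.univ : Finset (Equiv.Perm (Fin (m + p)))),
      (if (∀ i, ¬ forb m p i (σ i)) then (1:ℤ) else 0)
      = ∏ i ∈ Finset.univ, ((-(if forb m p i (σ i) then (1:ℤ) else 0)) + 1) := by
    intro σ _
    have : ∀ i : Fin (m+p), ((-(if forb m p i (σ i) then (1:ℤ) else 0)) + 1)
        = if ¬ forb m p i (σ i) then 1 else 0 := by
      intro i
      by_cases hf : forb m p i (σ i) <;> simp [hf]
    rw [Finset.prod_congr rfl (fun i _ => this i), Finset.prod_boole]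
    simp
  rw [Finset.sum_congr rfl h1]
  have h2 : ∀ σ ∈ (Finset.univ : Finset (Equiv.Perm (Fin (m + p)))),
      ∏ i ∈ Finset.univ, ((-(if forb m p i (σ i) then (1:ℤ) else 0)) + 1)
      = ∑ R ∈ (Finset.univ : Finset (Fin (m + p))).powerset,
          (-1) ^ R.card * (if (∀ i ∈ R, forb m p i (σ i)) then (1:ℤ) else 0) := by
    intro σ _
    rw [Finset.prod_add]
    refine Finset.sum_congr rfl (fun R hR => ?_)
    rw [Finset.prod_const_one, mul_one]
    by_cases hall : ∀ i ∈ R, forb m p i (σ i)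
    · rw [if_pos hall, mul_one]
      rw [Finset.prod_congr rfl (fun i hi => by rw [if_pos (hall i hi)] : ∀ i ∈ R,
        (-(if forb m p i (σ i) then (1:ℤ) else 0)) = -1)]
      rw [Finset.prod_const]
    · rw [if_neg hall, mul_zero]
      push_neg at hall
      obtain ⟨i0, hi0, hni0⟩ := hall
      exact Finset.prod_eq_zero hi0 (by rw [if_neg hni0]; ring)
  rw [Finset.sum_congr rfl h2, Finset.sum_comm]
  refine Finset.sum_congr rfl (fun R hR => ?_)
  rw [← Finset.mul_sum, Finset.sum_boole, step2]
  push_cast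
  ring


def colOf (T : Finset (ℕ × ℕ)) (r : ℕ) : ℕ := T.sup (fun x => if x.1 = r then x.2 else 0)

lemma colOf_eq {T : Finset (ℕ × ℕ)} (hrow : ∀ x ∈ T, ∀ y ∈ T, x.1 = y.1 → x = y)
    {x : ℕ × ℕ} (hx : x ∈ T) : colOf T x.1 = x.2 := by
  apply le_antisymm
  · apply Finset.sup_le
    intro y hy
    by_cases h : y.1 = x.1
    · rw [if_pos h, hrow y hy x hx h]
    · rw [if_neg h]; exact Nat.zero_le _
  · have := Finset.le_sup (f := fun y => if y.1 = x.1 then y.2 else 0) hx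
    simpa [colOf] using this

lemma row_mem {T : Finset (ℕ × ℕ)} (hrow : ∀ x ∈ T, ∀ y ∈ T, x.1 = y.1 → x = y)
    {r : ℕ} (hr : r ∈ T.image Prod.fst) : (r, colOf T r) ∈ T := by
  obtain ⟨x, hx, rfl⟩ := Finset.mem_image.mp hr
  rw [colOf_eq hrow hx]
  exact hx


lemma mem_TOPs {i : Fin (m + p)} : i ∈ TOPs m p ↔ (i : ℕ) + 2 ≤ m := by simp [TOPs]
lemma mem_BOTs {i : Fin (m + p)} : i ∈ BOTs m p ↔ m + 1 ≤ (i : ℕ) := by simp [BOTs]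


lemma transferTop (hm : 2 ≤ m) (hp : 2 ≤ p) (a : ℕ) :
    ∑ R ∈ (TOPs m p).powersetCard a, (Hf m p R).card = (PP (m - 1) a).card := by
  classical
  rw [← Finset.card_sigma]
  apply card_nbij'_compat
    (fun q => q.1.image (fun i => (Fin.val i, Fin.val (q.2 i) - (p + 1))))
    (fun T => ⟨Finset.univ.filter (fun i : Fin (m + p) => Fin.val i ∈ T.image Prod.fst),
      fun i => if Fin.val i ∈ T.image Prod.fst
        then (⟨min (colOf T (Fin.val i) + p + 1) (m + p - 1), by omega⟩ : Fin (m + p)) else i⟩)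
  · -- forward membership
    rintro ⟨R, h⟩ hq
    simp only [Finset.mem_sigma] at hq
    obtain ⟨hR, hh⟩ := hq
    rw [Finset.mem_powersetCard] at hR
    obtain ⟨hRsub, hRcard⟩ := hR
    rw [mem_Hf] at hh
    obtain ⟨hforb, hid, hinj⟩ := hh
    dsimp only at hRsub hRcard hforb hid hinj ⊢
    have hkey : ∀ i ∈ R, Fin.val i + 2 ≤ m ∧ Fin.val i + p + 1 ≤ Fin.val (h i)
        ∧ Fin.val (h i) ≤ m + p - 1 := by
      intro i hi
      have h1 := (mem_TOPs m p).mp (hRsub hi)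
      have h2 := forb_top m p (hRsub hi) (hforb i hi)
      have h3 := (h i).isLt
      omega
    rw [mem_PP]
    refine ⟨?_, ?_, ?_, ?_, ?_⟩
    · intro x hx
      obtain ⟨i, hi, rfl⟩ := Finset.mem_image.mp hx
      have := hkey i hi
      constructor <;> simp only <;> omega
    · rw [Finset.card_image_of_injOn, hRcard]
      intro i _ j _ hij
      exact Fin.val_injective (congrArg Prod.fst hij)
    · intro x hx
      obtain ⟨i, hi, rfl⟩ := Finset.mem_image.mp hx
      have := hkey i hi
      simp only
      omega
    · intro x hx y hy hxy
      obtain ⟨i, hi, rfl⟩ := Finset.mem_image.mp hx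
      obtain ⟨j, hj, rfl⟩ := Finset.mem_image.mp hy
      simp only at hxy
      rw [Fin.val_injective hxy]
    · intro x hx y hy hxy
      obtain ⟨i, hi, rfl⟩ := Finset.mem_image.mp hx
      obtain ⟨j, hj, rfl⟩ := Finset.mem_image.mp hy
      simp only at hxy
      have h1 := hkey i hi
      have h2 := hkey j hj
      have : Fin.val (h i) = Fin.val (h j) := by omega
      rw [hinj i hi j hj (Fin.val_injective this)]
  · -- backward membership
    intro T hT
    rw [mem_PP] at hT
    obtain ⟨hbd, hcard, hdiag, hrow, hcol⟩ := hT
    have hrows : ∀ r ∈ T.image Prod.fst, r < m - 1 := by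
      intro r hr
      obtain ⟨x, hx, rfl⟩ := Finset.mem_image.mp hr
      exact (hbd x hx).1
    have hcol_le : ∀ r ∈ T.image Prod.fst, r ≤ colOf T r ∧ colOf T r < m - 1 := by
      intro r hr
      have hc := row_mem hrow hr
      exact ⟨hdiag _ hc, (hbd _ hc).2⟩
    rw [Finset.mem_sigma]
    refine ⟨?_, ?_⟩
    · rw [Finset.mem_powersetCard]
      constructor
      · intro i hi
        simp only [mem_filter, Finset.mem_univ, true_and] at hi
        rw [mem_TOPs]
        have := hrows _ hi
        omega
      · dsimp only
        have h2 : (T.image Prod.fst).card = T.card :=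
          Finset.card_image_of_injOn (fun x hx y hy hxy => hrow x hx y hy hxy ▸ rfl)
        have h1 : (Finset.univ.filter
            (fun i : Fin (m + p) => Fin.val i ∈ T.image Prod.fst)).card
            = (T.image Prod.fst).card := by
          apply card_nbij'_compat (fun i => Fin.val i)
            (fun r => (⟨min r (m + p - 1), by omega⟩ : Fin (m + p)))
          · intro i hi
            exact (Finset.mem_filter.mp hi).2
          · intro r hr
            have hrm := hrows r hr
            simp only [mem_filter, Finset.mem_univ, true_and]
            have he : min r (m + p - 1) = r := by omega
            simpa [he] using hr
          · intro i hi
            have : Fin.val i < m + p := i.isLt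
            apply Fin.val_injective
            simp only
            omega
          · intro r hr
            have hrm := hrows r hr
            simp only
            omega
        rw [h1, h2, hcard]
    · rw [mem_Hf]
      dsimp only
      refine ⟨?_, ?_, ?_⟩
      · intro i hi
        simp only [mem_filter, Finset.mem_univ, true_and] at hi
        rw [if_pos hi]
        have h1 := hcol_le _ hi
        left
        simp only
        omega
      · intro i hi
        simp only [mem_filter, Finset.mem_univ, true_and] at hi
        rw [if_neg hi]
      · intro i hi j hj hij
        simp only [mem_filter, Finset.mem_univ, true_and] at hi hj
        rw [if_pos hi, if_pos hj] at hij
        have h1 := hcol_le _ hi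
        have h2 := hcol_le _ hj
        have hv := congrArg Fin.val hij
        simp only at hv
        have hcc : colOf T (Fin.val i) = colOf T (Fin.val j) := by omega
        have hc1 := row_mem hrow hi
        have hc2 := row_mem hrow hj
        rw [hcc] at hc1
        have := hcol _ hc1 _ hc2 rfl
        exact Fin.val_injective (congrArg Prod.fst this)
  · -- left inverse
    rintro ⟨R, h⟩ hq
    simp only [Finset.mem_sigma] at hq
    obtain ⟨hR, hh⟩ := hq
    rw [Finset.mem_powersetCard] at hR
    obtain ⟨hRsub, hRcard⟩ := hR
    rw [mem_Hf] at hh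
    obtain ⟨hforb, hid, hinj⟩ := hh
    dsimp only at hforb hid hinj ⊢
    have hkey : ∀ i ∈ R, Fin.val i + 2 ≤ m ∧ Fin.val i + p + 1 ≤ Fin.val (h i)
        ∧ Fin.val (h i) ≤ m + p - 1 := by
      intro i hi
      have h1 := (mem_TOPs m p).mp (hRsub hi)
      have h2 := forb_top m p (hRsub hi) (hforb i hi)
      have h3 := (h i).isLt
      omega
    set U := R.image (fun i => (Fin.val i, Fin.val (h i) - (p + 1))) with hU
    have hUrows : U.image Prod.fst = R.image Fin.val := by
      rw [hU, Finset.image_image]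
      rfl
    have hmemrows : ∀ i : Fin (m + p), (Fin.val i ∈ U.image Prod.fst ↔ i ∈ R) := by
      intro i
      rw [hUrows]
      simp only [Finset.mem_image]
      constructor
      · rintro ⟨j, hj, hji⟩
        rwa [← Fin.val_injective hji]
      · intro hi
        exact ⟨i, hi, rfl⟩
    have hUrow_inj : ∀ x ∈ U, ∀ y ∈ U, x.1 = y.1 → x = y := by
      intro x hx y hy hxy
      rw [hU] at hx hy
      obtain ⟨i, hi, rfl⟩ := Finset.mem_image.mp hx
      obtain ⟨j, hj, rfl⟩ := Finset.mem_image.mp hy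
      simp only at hxy
      rw [Fin.val_injective hxy]
    have hfst : Finset.univ.filter
        (fun i : Fin (m + p) => Fin.val i ∈ U.image Prod.fst) = R := by
      ext i
      simp only [mem_filter, Finset.mem_univ, true_and]
      exact hmemrows i
    have hsnd : (fun i : Fin (m + p) => if Fin.val i ∈ U.image Prod.fst
        then (⟨min (colOf U (Fin.val i) + p + 1) (m + p - 1), by omega⟩ : Fin (m + p)) else i)
        = h := by
      funext i
      by_cases hi : i ∈ R
      · rw [if_pos ((hmemrows i).mpr hi)]
        have hcell : (Fin.val i, Fin.val (h i) - (p + 1)) ∈ U :=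
          hU ▸ Finset.mem_image_of_mem _ hi
        have hcolv : colOf U (Fin.val i) = Fin.val (h i) - (p + 1) :=
          colOf_eq hUrow_inj hcell
        have hk := hkey i hi
        apply Fin.val_injective
        simp only [hcolv]
        omega
      · rw [if_neg (fun hc => hi ((hmemrows i).mp hc))]
        exact (hid i hi).symm
    exact Sigma.ext hfst (heq_of_eq hsnd)
  · -- right inverse
    intro T hT
    rw [mem_PP] at hT
    obtain ⟨hbd, hcard, hdiag, hrow, hcol⟩ := hT
    dsimp only
    have hrows : ∀ r ∈ T.image Prod.fst, r < m - 1 := by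
      intro r hr
      obtain ⟨x, hx, rfl⟩ := Finset.mem_image.mp hr
      exact (hbd x hx).1
    have hcol_le : ∀ r ∈ T.image Prod.fst, r ≤ colOf T r ∧ colOf T r < m - 1 := by
      intro r hr
      have hc := row_mem hrow hr
      exact ⟨hdiag _ hc, (hbd _ hc).2⟩
    ext x
    constructor
    · intro hmem
      obtain ⟨i, hif, hival⟩ := Finset.mem_image.mp hmem
      have hi : Fin.val i ∈ T.image Prod.fst := (Finset.mem_filter.mp hif).2
      have h1 := hcol_le _ hi
      rw [if_pos hi] at hival
      have he : min (colOf T (Fin.val i) + p + 1) (m + p - 1) = colOf T (Fin.val i) + p + 1 := by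
        omega
      have hx2 : (Fin.val i, colOf T (Fin.val i)) = x := by
        rw [← hival]
        apply Prod.ext
        · rfl
        · show colOf T (Fin.val i) = min (colOf T (Fin.val i) + p + 1) (m + p - 1) - (p + 1)
          omega
      rw [← hx2]
      exact row_mem hrow hi
    · intro hx
      apply Finset.mem_image.mpr
      have hxr : x.1 ∈ T.image Prod.fst := Finset.mem_image_of_mem _ hx
      have hxlt : x.1 < m + p := by have := hrows _ hxr; omega
      refine ⟨⟨x.1, hxlt⟩, Finset.mem_filter.mpr ⟨Finset.mem_univ _, hxr⟩, ?_⟩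
      rw [if_pos (show Fin.val (⟨x.1, hxlt⟩ : Fin (m + p)) ∈ T.image Prod.fst from hxr)]
      have hcv : colOf T x.1 = x.2 := colOf_eq hrow hx
      have h1 := hcol_le _ hxr
      apply Prod.ext
      · rfl
      · show Fin.val (⟨min (colOf T x.1 + p + 1) (m + p - 1), by omega⟩ : Fin (m + p)) - (p + 1)
          = x.2
        simp only
        omega
lemma transferBot (hm : 2 ≤ m) (hp : 2 ≤ p) (a : ℕ) :
    ∑ R ∈ (BOTs m p).powersetCard a, (Hf m p R).card = (PP (p - 1) a).card := by
  classical
  rw [← Finset.card_sigma]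
  apply card_nbij'_compat
    (fun q => q.1.image (fun i => (m + p - 1 - Fin.val i, p - 2 - Fin.val (q.2 i))))
    (fun T => ⟨Finset.univ.filter (fun i : Fin (m + p) => m + p - 1 - Fin.val i ∈ T.image Prod.fst),
      fun i => if m + p - 1 - Fin.val i ∈ T.image Prod.fst
        then (⟨p - 2 - colOf T (m + p - 1 - Fin.val i), by omega⟩ : Fin (m + p)) else i⟩)
  · -- forward membership
    rintro ⟨R, h⟩ hq
    simp only [Finset.mem_sigma] at hq
    obtain ⟨hR, hh⟩ := hq
    rw [Finset.mem_powersetCard] at hR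
    obtain ⟨hRsub, hRcard⟩ := hR
    rw [mem_Hf] at hh
    obtain ⟨hforb, hid, hinj⟩ := hh
    dsimp only at hRsub hRcard hforb hid hinj ⊢
    have hkey : ∀ i ∈ R, m + 1 ≤ Fin.val i ∧ Fin.val i ≤ m + p - 1
        ∧ Fin.val (h i) + m + 1 ≤ Fin.val i ∧ Fin.val (h i) ≤ p - 2 := by
      intro i hi
      have h1 := (mem_BOTs m p).mp (hRsub hi)
      have h2 := forb_bot m p (hRsub hi) (hforb i hi)
      have h3 := i.isLt
      omega
    rw [mem_PP]
    refine ⟨?_, ?_, ?_, ?_, ?_⟩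
    · intro x hx
      obtain ⟨i, hi, rfl⟩ := Finset.mem_image.mp hx
      have := hkey i hi
      constructor <;> simp only <;> omega
    · rw [Finset.card_image_of_injOn, hRcard]
      intro i hi j hj hij
      have h1 := hkey i hi
      have h2 := hkey j hj
      have : Fin.val i = Fin.val j := by
        have := congrArg Prod.fst hij
        simp only at this
        omega
      exact Fin.val_injective this
    · intro x hx
      obtain ⟨i, hi, rfl⟩ := Finset.mem_image.mp hx
      have := hkey i hi
      simp only
      omega
    · intro x hx y hy hxy
      obtain ⟨i, hi, rfl⟩ := Finset.mem_image.mp hx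
      obtain ⟨j, hj, rfl⟩ := Finset.mem_image.mp hy
      simp only at hxy
      have h1 := hkey i hi
      have h2 := hkey j hj
      have : Fin.val i = Fin.val j := by omega
      rw [Fin.val_injective this]
    · intro x hx y hy hxy
      obtain ⟨i, hi, rfl⟩ := Finset.mem_image.mp hx
      obtain ⟨j, hj, rfl⟩ := Finset.mem_image.mp hy
      simp only at hxy
      have h1 := hkey i hi
      have h2 := hkey j hj
      have : Fin.val (h i) = Fin.val (h j) := by omega
      rw [hinj i hi j hj (Fin.val_injective this)]
  · -- backward membership
    intro T hT
    rw [mem_PP] at hT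
    obtain ⟨hbd, hcard, hdiag, hrow, hcol⟩ := hT
    have hrows : ∀ r ∈ T.image Prod.fst, r < p - 1 := by
      intro r hr
      obtain ⟨x, hx, rfl⟩ := Finset.mem_image.mp hr
      exact (hbd x hx).1
    have hcol_le : ∀ r ∈ T.image Prod.fst, r ≤ colOf T r ∧ colOf T r < p - 1 := by
      intro r hr
      have hc := row_mem hrow hr
      exact ⟨hdiag _ hc, (hbd _ hc).2⟩
    rw [Finset.mem_sigma]
    refine ⟨?_, ?_⟩
    · rw [Finset.mem_powersetCard]
      constructor
      · intro i hi
        simp only [mem_filter, Finset.mem_univ, true_and] at hi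
        rw [mem_BOTs]
        have h1 := hrows _ hi
        have h2 := i.isLt
        omega
      · dsimp only
        have h2 : (T.image Prod.fst).card = T.card :=
          Finset.card_image_of_injOn (fun x hx y hy hxy => hrow x hx y hy hxy ▸ rfl)
        have h1 : (Finset.univ.filter
            (fun i : Fin (m + p) => m + p - 1 - Fin.val i ∈ T.image Prod.fst)).card
            = (T.image Prod.fst).card := by
          apply card_nbij'_compat (fun i => m + p - 1 - Fin.val i)
            (fun r => (⟨m + p - 1 - r, by omega⟩ : Fin (m + p)))
          · intro i hi
            exact (Finset.mem_filter.mp hi).2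
          · intro r hr
            have hrm := hrows r hr
            simp only [mem_filter, Finset.mem_univ, true_and]
            have he : m + p - 1 - Fin.val (⟨m + p - 1 - r, by omega⟩ : Fin (m + p)) = r := by
              simp only
              omega
            rwa [he]
          · intro i hi
            simp only [mem_filter, Finset.mem_univ, true_and] at hi
            have h3 := hrows _ hi
            have h4 := i.isLt
            apply Fin.val_injective
            simp only
            omega
          · intro r hr
            have hrm := hrows r hr
            simp only
            omega
        rw [h1, h2, hcard]
    · rw [mem_Hf]
      dsimp only
      refine ⟨?_, ?_, ?_⟩
      · intro i hi
        simp only [mem_filter, Finset.mem_univ, true_and] at hi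
        rw [if_pos hi]
        have h1 := hcol_le _ hi
        have h2 := i.isLt
        right
        simp only
        omega
      · intro i hi
        simp only [mem_filter, Finset.mem_univ, true_and] at hi
        rw [if_neg hi]
      · intro i hi j hj hij
        simp only [mem_filter, Finset.mem_univ, true_and] at hi hj
        rw [if_pos hi, if_pos hj] at hij
        have h1 := hcol_le _ hi
        have h2 := hcol_le _ hj
        have hv := congrArg Fin.val hij
        simp only at hv
        have hcc : colOf T (m + p - 1 - Fin.val i) = colOf T (m + p - 1 - Fin.val j) := by omega
        have hc1 := row_mem hrow hi
        have hc2 := row_mem hrow hj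
        rw [hcc] at hc1
        have := hcol _ hc1 _ hc2 rfl
        have hrr := congrArg Prod.fst this
        simp only at hrr
        have h3 := i.isLt
        have h4 := j.isLt
        apply Fin.val_injective
        omega
  · -- left inverse
    rintro ⟨R, h⟩ hq
    simp only [Finset.mem_sigma] at hq
    obtain ⟨hR, hh⟩ := hq
    rw [Finset.mem_powersetCard] at hR
    obtain ⟨hRsub, hRcard⟩ := hR
    rw [mem_Hf] at hh
    obtain ⟨hforb, hid, hinj⟩ := hh
    dsimp only at hforb hid hinj ⊢
    have hkey : ∀ i ∈ R, m + 1 ≤ Fin.val i ∧ Fin.val i ≤ m + p - 1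
        ∧ Fin.val (h i) + m + 1 ≤ Fin.val i ∧ Fin.val (h i) ≤ p - 2 := by
      intro i hi
      have h1 := (mem_BOTs m p).mp (hRsub hi)
      have h2 := forb_bot m p (hRsub hi) (hforb i hi)
      have h3 := i.isLt
      omega
    set U := R.image (fun i => (m + p - 1 - Fin.val i, p - 2 - Fin.val (h i))) with hU
    have hmemrows : ∀ i : Fin (m + p), i ∈ R →
        m + p - 1 - Fin.val i ∈ U.image Prod.fst := by
      intro i hi
      rw [hU]
      apply Finset.mem_image.mpr
      exact ⟨(m + p - 1 - Fin.val i, p - 2 - Fin.val (h i)),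
        Finset.mem_image_of_mem _ hi, rfl⟩
    have hmemrows' : ∀ i : Fin (m + p), m + p - 1 - Fin.val i ∈ U.image Prod.fst → i ∈ R := by
      intro i hii
      rw [hU] at hii
      obtain ⟨x, hx, hxi⟩ := Finset.mem_image.mp hii
      obtain ⟨j, hj, rfl⟩ := Finset.mem_image.mp hx
      simp only at hxi
      have h1 := hkey j hj
      have h2 := i.isLt
      have : Fin.val j = Fin.val i := by omega
      rwa [← Fin.val_injective this]
    have hUrow_inj : ∀ x ∈ U, ∀ y ∈ U, x.1 = y.1 → x = y := by
      intro x hx y hy hxy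
      rw [hU] at hx hy
      obtain ⟨i, hi, rfl⟩ := Finset.mem_image.mp hx
      obtain ⟨j, hj, rfl⟩ := Finset.mem_image.mp hy
      simp only at hxy
      have h1 := hkey i hi
      have h2 := hkey j hj
      have : Fin.val i = Fin.val j := by omega
      rw [Fin.val_injective this]
    have hfst : Finset.univ.filter
        (fun i : Fin (m + p) => m + p - 1 - Fin.val i ∈ U.image Prod.fst) = R := by
      ext i
      simp only [mem_filter, Finset.mem_univ, true_and]
      exact ⟨hmemrows' i, hmemrows i⟩
    have hsnd : (fun i : Fin (m + p) => if m + p - 1 - Fin.val i ∈ U.image Prod.fst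
        then (⟨p - 2 - colOf U (m + p - 1 - Fin.val i), by omega⟩ : Fin (m + p)) else i)
        = h := by
      funext i
      by_cases hi : i ∈ R
      · rw [if_pos (hmemrows i hi)]
        have hcell : (m + p - 1 - Fin.val i, p - 2 - Fin.val (h i)) ∈ U :=
          hU ▸ Finset.mem_image_of_mem _ hi
        have hcolv : colOf U (m + p - 1 - Fin.val i) = p - 2 - Fin.val (h i) :=
          colOf_eq hUrow_inj hcell
        have hk := hkey i hi
        apply Fin.val_injective
        simp only [hcolv]
        omega
      · rw [if_neg (fun hc => hi (hmemrows' i hc))]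
        exact (hid i hi).symm
    exact Sigma.ext hfst (heq_of_eq hsnd)
  · -- right inverse
    intro T hT
    rw [mem_PP] at hT
    obtain ⟨hbd, hcard, hdiag, hrow, hcol⟩ := hT
    dsimp only
    have hrows : ∀ r ∈ T.image Prod.fst, r < p - 1 := by
      intro r hr
      obtain ⟨x, hx, rfl⟩ := Finset.mem_image.mp hr
      exact (hbd x hx).1
    have hcol_le : ∀ r ∈ T.image Prod.fst, r ≤ colOf T r ∧ colOf T r < p - 1 := by
      intro r hr
      have hc := row_mem hrow hr
      exact ⟨hdiag _ hc, (hbd _ hc).2⟩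
    ext x
    constructor
    · intro hmem
      obtain ⟨i, hif, hival⟩ := Finset.mem_image.mp hmem
      have hi : m + p - 1 - Fin.val i ∈ T.image Prod.fst := (Finset.mem_filter.mp hif).2
      have h1 := hcol_le _ hi
      rw [if_pos hi] at hival
      have hx2 : (m + p - 1 - Fin.val i, colOf T (m + p - 1 - Fin.val i)) = x := by
        rw [← hival]
        apply Prod.ext
        · rfl
        · show colOf T (m + p - 1 - Fin.val i)
            = p - 2 - Fin.val (⟨p - 2 - colOf T (m + p - 1 - Fin.val i), by omega⟩ : Fin (m + p))
          simp only
          omega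
      rw [← hx2]
      exact row_mem hrow hi
    · intro hx
      apply Finset.mem_image.mpr
      have hxr : x.1 ∈ T.image Prod.fst := Finset.mem_image_of_mem _ hx
      have hxlt : x.1 < p - 1 := hrows _ hxr
      have hilt : m + p - 1 - x.1 < m + p := by omega
      refine ⟨⟨m + p - 1 - x.1, hilt⟩, ?_, ?_⟩
      · apply Finset.mem_filter.mpr
        refine ⟨Finset.mem_univ _, ?_⟩
        have he : m + p - 1 - Fin.val (⟨m + p - 1 - x.1, hilt⟩ : Fin (m + p)) = x.1 := by
          simp only
          omega
        rwa [he]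
      · have he : m + p - 1 - Fin.val (⟨m + p - 1 - x.1, hilt⟩ : Fin (m + p)) = x.1 := by
          simp only
          omega
        simp only [he, if_pos hxr]
        have hcv : colOf T x.1 = x.2 := colOf_eq hrow hx
        have h1 := hcol_le _ hxr
        apply Prod.ext
        · rfl
        · show p - 2 - Fin.val (⟨p - 2 - colOf T x.1, by omega⟩ : Fin (m + p)) = x.2
          simp only
          omega


lemma card_TOPs (hm : 2 ≤ m) (hp : 2 ≤ p) : (TOPs m p).card = m - 1 := by
  rw [← Finset.card_range (m - 1)]
  apply card_nbij'_compat (fun i => Fin.val i)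
    (fun r => (⟨min r (m + p - 1), by omega⟩ : Fin (m + p)))
  · intro i hi
    rw [mem_TOPs] at hi
    exact Finset.mem_range.mpr (by omega)
  · intro r hr
    rw [Finset.mem_range] at hr
    rw [mem_TOPs]
    simp only
    omega
  · intro i hi
    rw [mem_TOPs] at hi
    have := i.isLt
    apply Fin.val_injective
    simp only
    omega
  · intro r hr
    rw [Finset.mem_range] at hr
    simp only
    omega

lemma card_BOTs (hm : 2 ≤ m) (hp : 2 ≤ p) : (BOTs m p).card = p - 1 := by
  rw [← Finset.card_range (p - 1)]
  apply card_nbij'_compat (fun i => Fin.val i - (m + 1))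
    (fun r => (⟨min (r + m + 1) (m + p - 1), by omega⟩ : Fin (m + p)))
  · intro i hi
    rw [mem_BOTs] at hi
    have := i.isLt
    exact Finset.mem_range.mpr (by omega)
  · intro r hr
    rw [Finset.mem_range] at hr
    rw [mem_BOTs]
    simp only
    omega
  · intro i hi
    rw [mem_BOTs] at hi
    have := i.isLt
    apply Fin.val_injective
    simp only
    omega
  · intro r hr
    rw [Finset.mem_range] at hr
    simp only
    omega


end main


lemma final_algebra (m p : ℕ) (hm : 2 ≤ m) (hp : 2 ≤ p) :
    ∑ a ∈ range m, (stirling m (m - a) : ℤ) *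
      ∑ b ∈ range p, (stirling p (p - b) : ℤ) *
        ((-1) ^ (a + b) * ((m + p - (a + b)).factorial : ℤ))
    = (-1) ^ p * ∑ i ∈ range (p + 1),
        (-1) ^ i * (Nat.factorial i : ℤ) * ((i : ℤ) + 1) ^ m * (stirling p i : ℤ) := by
  set w : ℕ → ℕ → ℤ := fun j k =>
    (-1)^j * (-1)^k * (stirling m j : ℤ) * (stirling p k : ℤ) * ((j + k).factorial : ℤ) with hw
  have claim1 : ∑ a ∈ range m, (stirling m (m - a) : ℤ) *
      ∑ b ∈ range p, (stirling p (p - b) : ℤ) *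
        ((-1) ^ (a + b) * ((m + p - (a + b)).factorial : ℤ))
      = (-1)^m * (-1)^p * ∑ j ∈ range (m + 1), ∑ k ∈ range (p + 1), w j k := by
    rw [← Finset.sum_range_reflect]
    have hpt : ∀ a ∈ range m, (stirling m (m - (m - 1 - a)) : ℤ) *
        ∑ b ∈ range p, (stirling p (p - b) : ℤ) *
          ((-1) ^ ((m - 1 - a) + b) * ((m + p - ((m - 1 - a) + b)).factorial : ℤ))
        = (-1)^m * (-1)^p * ∑ k ∈ range (p + 1), w (a + 1) k := by
      intro a ha
      rw [Finset.mem_range] at ha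
      rw [← Finset.sum_range_reflect, Finset.mul_sum]
      have hin : ∀ b ∈ range p, (stirling m (m - (m - 1 - a)) : ℤ) *
          ((stirling p (p - (p - 1 - b)) : ℤ) *
          ((-1) ^ ((m - 1 - a) + (p - 1 - b)) * ((m + p - ((m - 1 - a) + (p - 1 - b))).factorial : ℤ)))
          = (-1)^m * (-1)^p * w (a + 1) (b + 1) := by
        intro b hb
        rw [Finset.mem_range] at hb
        have e1 : m - (m - 1 - a) = a + 1 := by omega
        have e2 : p - (p - 1 - b) = b + 1 := by omega
        have e3 : m + p - ((m - 1 - a) + (p - 1 - b)) = (a + 1) + (b + 1) := by omega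
        have e4 : (-1:ℤ)^((m - 1 - a) + (p - 1 - b))
            = (-1)^(m + p) * (-1)^((a + 1) + (b + 1)) :=
          neg_one_pow_eq _ _ _ (by omega)
        rw [e1, e2, e3, e4, hw]
        simp only
        rw [pow_add (-1:ℤ) m p, pow_add (-1:ℤ) (a+1) (b+1)]
        ring
      rw [Finset.sum_congr rfl hin]
      rw [Finset.sum_range_succ' (fun k => w (a + 1) k) p]
      have hz : w (a + 1) 0 = 0 := by
        rw [hw]
        simp only
        rw [stirling_zero_right p (by omega)]
        push_cast
        ring
      rw [hz, add_zero, ← Finset.mul_sum]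
    rw [Finset.sum_congr rfl (fun a ha => by
      rw [show (stirling m (m - (m - 1 - a)) : ℤ) *
        ∑ b ∈ range p, (stirling p (p - b) : ℤ) *
          ((-1) ^ ((m - 1 - a) + b) * ((m + p - ((m - 1 - a) + b)).factorial : ℤ))
        = (-1)^m * (-1)^p * ∑ k ∈ range (p + 1), w (a + 1) k from hpt a ha])]
    rw [← Finset.mul_sum]
    congr 1
    rw [Finset.sum_range_succ' (fun j => ∑ k ∈ range (p + 1), w j k) m]
    have hz : ∑ k ∈ range (p + 1), w 0 k = 0 := by
      apply Finset.sum_eq_zero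
      intro k _
      rw [hw]
      simp only
      rw [stirling_zero_right m (by omega)]
      push_cast
      ring
    rw [hz, add_zero]
  rw [claim1, Finset.sum_comm]
  have hinner : ∀ k ∈ range (p + 1), ∑ j ∈ range (m + 1), w j k
      = (-1)^k * (stirling p k : ℤ) * ((-1)^m * (k.factorial : ℤ) * ((k : ℤ) + 1)^m) := by
    intro k _
    rw [← L1 m k, Finset.mul_sum]
    apply Finset.sum_congr rfl
    intro j _
    rw [hw]
    simp only
    ring
  rw [Finset.sum_congr rfl hinner]
  rw [Finset.mul_sum, Finset.mul_sum]
  apply Finset.sum_congr rfl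
  intro k _
  have h2 : (-1:ℤ)^m * (-1)^m = 1 := by
    rw [← pow_add]
    exact Even.neg_one_pow ⟨m, rfl⟩
  calc (-1:ℤ)^m * (-1)^p * ((-1)^k * (stirling p k : ℤ)
        * ((-1)^m * (k.factorial : ℤ) * ((k : ℤ) + 1)^m))
      = ((-1:ℤ)^m * (-1)^m) * ((-1)^p * ((-1)^k * (k.factorial : ℤ)
        * ((k : ℤ) + 1)^m * (stirling p k : ℤ))) := by ring
    _ = (-1)^p * ((-1) ^ k * (Nat.factorial k : ℤ) * ((k : ℤ) + 1) ^ m * (stirling p k : ℤ)) := by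
        rw [h2, one_mul]

lemma sum_powerset_weight {α : Type*} [DecidableEq α] (S : Finset α) (c : Finset α → ℕ)
    (w : ℕ → ℤ) :
    ∑ R ∈ S.powerset, (c R : ℤ) * w R.card
      = ∑ a ∈ range (S.card + 1), (∑ R ∈ S.powersetCard a, (c R : ℤ)) * w a := by
  rw [Finset.sum_powerset]
  apply Finset.sum_congr rfl
  intro a _
  rw [Finset.sum_mul]
  apply Finset.sum_congr rfl
  intro R hR
  rw [(Finset.mem_powersetCard.mp hR).2]

theorem stmt1 (m p : ℕ) (hm : 2 ≤ m) (hp : 2 ≤ p) :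
    ((Finset.univ.filter (fun σ : Equiv.Perm (Fin (m + p)) =>
        ∀ i : Fin (m + p), -(p : ℤ) ≤ ((i : ℕ) : ℤ) - ((σ i : ℕ) : ℤ) ∧
          ((i : ℕ) : ℤ) - ((σ i : ℕ) : ℤ) ≤ (m : ℤ))).card : ℤ)
      = (-1) ^ p * ∑ i ∈ Finset.range (p + 1),
          (-1) ^ i * (Nat.factorial i : ℤ) * ((i : ℤ) + 1) ^ m * (stirling p i : ℤ) := by
  classical
  have hfilter : (Finset.univ.filter (fun σ : Equiv.Perm (Fin (m + p)) =>
        ∀ i : Fin (m + p), -(p : ℤ) ≤ ((i : ℕ) : ℤ) - ((σ i : ℕ) : ℤ) ∧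
          ((i : ℕ) : ℤ) - ((σ i : ℕ) : ℤ) ≤ (m : ℤ)))
      = (Finset.univ.filter (fun σ : Equiv.Perm (Fin (m + p)) =>
        ∀ i, ¬ forb m p i (σ i))) := by
    apply Finset.filter_congr
    intro σ _
    constructor
    · intro h i
      have := h i
      simp only [forb, not_or, not_lt]
      omega
    · intro h i
      have := h i
      simp only [forb, not_or, not_lt] at this
      omega
  rw [hfilter, step12 m p]
  -- restrict to subsets of TOPs ∪ BOTs
  rw [← Finset.sum_subset
    (Finset.powerset_mono.mpr (Finset.subset_univ (TOPs m p ∪ BOTs m p)))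
    (fun R _ hR => by
      rw [Hzero m p (fun hc => hR (Finset.mem_powerset.mpr hc))]
      push_cast
      ring)]
  -- split into pairs
  rw [Finset.sum_nbij' (i := fun R => (R ∩ TOPs m p, R ∩ BOTs m p))
    (j := fun q => q.1 ∪ q.2)
    (t := (TOPs m p).powerset ×ˢ (BOTs m p).powerset)
    (g := fun q => ((Hf m p q.1).card : ℤ) * (((Hf m p q.2).card : ℤ) *
      ((-1) ^ (q.1.card + q.2.card) * ((m + p - (q.1.card + q.2.card)).factorial : ℤ))))
    (fun R hR => Finset.mem_product.mpr
      ⟨Finset.mem_powerset.mpr Finset.inter_subset_right,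
       Finset.mem_powerset.mpr Finset.inter_subset_right⟩)
    (fun q hq => by
      obtain ⟨h1, h2⟩ := Finset.mem_product.mp hq
      exact Finset.mem_powerset.mpr (Finset.union_subset_union
        (Finset.mem_powerset.mp h1) (Finset.mem_powerset.mp h2)))
    (fun R hR => by
      show (R ∩ TOPs m p) ∪ (R ∩ BOTs m p) = R
      rw [← Finset.inter_union_distrib_left]
      exact Finset.inter_eq_left.mpr (Finset.mem_powerset.mp hR))
    (fun q hq => by
      obtain ⟨h1, h2⟩ := Finset.mem_product.mp hq
      rw [Finset.mem_powerset] at h1 h2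
      have hd := TOPs_disj_BOTs m p
      apply Prod.ext
      · show (q.1 ∪ q.2) ∩ TOPs m p = q.1
        rw [Finset.union_inter_distrib_right, Finset.inter_eq_left.mpr h1,
          Finset.disjoint_iff_inter_eq_empty.mp (Finset.disjoint_of_subset_left h2 hd.symm),
          Finset.union_empty]
      · show (q.1 ∪ q.2) ∩ BOTs m p = q.2
        rw [Finset.union_inter_distrib_right, Finset.inter_eq_left.mpr h2,
          Finset.disjoint_iff_inter_eq_empty.mp (Finset.disjoint_of_subset_left h1 hd),
          Finset.empty_union])
    (fun R hR => by
      have hsub := Finset.mem_powerset.mp hR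
      have hU : (R ∩ TOPs m p) ∪ (R ∩ BOTs m p) = R := by
        rw [← Finset.inter_union_distrib_left]
        exact Finset.inter_eq_left.mpr hsub
      have hd : Disjoint (R ∩ TOPs m p) (R ∩ BOTs m p) :=
        Finset.disjoint_of_subset_left Finset.inter_subset_right
          (Finset.disjoint_of_subset_right Finset.inter_subset_right (TOPs_disj_BOTs m p))
      have hcard : R.card = (R ∩ TOPs m p).card + (R ∩ BOTs m p).card := by
        conv_lhs => rw [← hU]
        exact Finset.card_union_of_disjoint hd
      have hsplit : (Hf m p R).card = (Hf m p (R ∩ TOPs m p)).card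
          * (Hf m p (R ∩ BOTs m p)).card := by
        conv_lhs => rw [← hU]
        exact Hsplit m p Finset.inter_subset_right Finset.inter_subset_right
      rw [hcard, hsplit]
      push_cast
      ring)]
  rw [Finset.sum_product]
  -- group by sizes
  have houter : ∀ R1 ∈ (TOPs m p).powerset,
      ∑ R2 ∈ (BOTs m p).powerset, ((Hf m p R1).card : ℤ) * (((Hf m p R2).card : ℤ) *
        ((-1) ^ (R1.card + R2.card) * ((m + p - (R1.card + R2.card)).factorial : ℤ)))
      = ((Hf m p R1).card : ℤ) *
        ∑ b ∈ range ((BOTs m p).card + 1), ((PP (p - 1) b).card : ℤ) *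
          ((-1) ^ (R1.card + b) * ((m + p - (R1.card + b)).factorial : ℤ)) := by
    intro R1 _
    rw [← Finset.mul_sum]
    congr 1
    rw [sum_powerset_weight (BOTs m p) (fun R2 => (Hf m p R2).card)
      (fun b => (-1) ^ (R1.card + b) * ((m + p - (R1.card + b)).factorial : ℤ))]
    apply Finset.sum_congr rfl
    intro b _
    rw [← Nat.cast_sum, transferBot m p hm hp b]
  rw [Finset.sum_congr rfl houter]
  rw [sum_powerset_weight (TOPs m p) (fun R1 => (Hf m p R1).card)
    (fun a => ∑ b ∈ range ((BOTs m p).card + 1), ((PP (p - 1) b).card : ℤ) *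
      ((-1) ^ (a + b) * ((m + p - (a + b)).factorial : ℤ)))]
  have hrw : ∀ a ∈ range ((TOPs m p).card + 1),
      (∑ R1 ∈ (TOPs m p).powersetCard a, ((Hf m p R1).card : ℤ)) *
        (∑ b ∈ range ((BOTs m p).card + 1), ((PP (p - 1) b).card : ℤ) *
          ((-1) ^ (a + b) * ((m + p - (a + b)).factorial : ℤ)))
      = (stirling m (m - a) : ℤ) *
        ∑ b ∈ range p, (stirling p (p - b) : ℤ) *
          ((-1) ^ (a + b) * ((m + p - (a + b)).factorial : ℤ)) := by
    intro a _
    congr 1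
    · rw [← Nat.cast_sum, transferTop m p hm hp a, PP_card,
        show m - 1 + 1 = m by omega]
    · rw [card_BOTs m p hm hp, show p - 1 + 1 = p by omega]
      apply Finset.sum_congr rfl
      intro b _
      rw [PP_card, show p - 1 + 1 = p by omega]
  rw [Finset.sum_congr rfl hrw, card_TOPs m p hm hp, show m - 1 + 1 = m by omega]
  exact final_algebra m p hm hp
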